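/- Let n ≥ 2 and let x = (x¹, …, xⁿ) be a point cloud in ℝ³ whose points are pairwise distinct; set m = min over pairs k ≠ l of ‖xᵏ − xˡ‖₂. If the perturbation δ = (δ¹, …, δⁿ) satisfies ‖δʲ‖₂ ≤ m/2 for every j, then the Chamfer distance between the perturbed and clean point clouds satisfies 𝒟_c(x + δ, x) = (2/n) · Σ_{j=1}^{n} ‖δʲ‖₂². -/

import Mathlib

set_option maxHeartbeats 800000


open scoped BigOperators

/-- The Chamfer distance between two point clouds `a, b` with `n` points in ℝ³:
`𝒟_c(a, b) = (1/n) Σ_j min_k ‖aʲ − bᵏ‖² + (1/n) Σ_k min_j ‖bᵏ − aʲ‖²`. -/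
noncomputable def chamferDist (n : ℕ) (a b : Fin n → EuclideanSpace ℝ (Fin 3)) : ℝ :=
  (1 / n : ℝ) * ∑ j : Fin n, (⨅ k : Fin n, ‖a j - b k‖ ^ 2) +
  (1 / n : ℝ) * ∑ k : Fin n, (⨅ j : Fin n, ‖b k - a j‖ ^ 2)

lemma my_iInf_eq_of_le {n : ℕ} [Nonempty (Fin n)] (f : Fin n → ℝ) (j : Fin n)
    (h : ∀ k, f j ≤ f k) : (⨅ k, f k) = f j :=
  le_antisymm (ciInf_le (Finite.bddBelow_range f) j) (le_ciInf h)

/-- If every perturbation has norm at most half the minimal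
pairwise distance `m` of the (pairwise distinct) clean points, then
`𝒟_c(x + δ, x) = (2/n) Σ_j ‖δʲ‖²`. -/
theorem chamfer_eq_of_small_perturbation
    (n : ℕ) (hn : 2 ≤ n)
    (x δ : Fin n → EuclideanSpace ℝ (Fin 3))
    (hx : Function.Injective x)
    (m : ℝ)
    (hm : m = ⨅ p : {p : Fin n × Fin n // p.1 ≠ p.2}, ‖x p.1.1 - x p.1.2‖)
    (hδ : ∀ j, ‖δ j‖ ≤ m / 2) :
    chamferDist n (fun j => x j + δ j) x = (2 / n : ℝ) * ∑ j : Fin n, ‖δ j‖ ^ 2 := by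
  have hn1 : 0 < n := by omega
  haveI : Nonempty (Fin n) := ⟨⟨0, hn1⟩⟩
  have hmle : ∀ a b : Fin n, a ≠ b → m ≤ ‖x a - x b‖ := by
    intro a b hab
    rw [hm]
    have hb : BddBelow (Set.range fun p : {p : Fin n × Fin n // p.1 ≠ p.2} => ‖x p.1.1 - x p.1.2‖) :=
      ⟨0, by rintro y ⟨p, rfl⟩; exact norm_nonneg _⟩
    exact ciInf_le hb ⟨(a, b), hab⟩
  have key1 : ∀ j k : Fin n, k ≠ j → ‖δ j‖ ≤ ‖x j + δ j - x k‖ := by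
    intro j k hkj
    have h1 : m ≤ ‖x j - x k‖ := hmle j k hkj.symm
    have h2 : ‖x j - x k‖ ≤ ‖x j + δ j - x k‖ + ‖δ j‖ := by
      have h := norm_sub_le (x j + δ j - x k) (δ j)
      have he : x j + δ j - x k - δ j = x j - x k := by abel
      rw [he] at h
      exact h
    have h3 := hδ j
    linarith
  have key2 : ∀ k j : Fin n, j ≠ k → ‖δ k‖ ≤ ‖x k - (x j + δ j)‖ := by
    intro k j hjk
    have h1 : m ≤ ‖x k - x j‖ := hmle k j hjk.symm
    have h2 : ‖x k - x j‖ ≤ ‖x k - (x j + δ j)‖ + ‖δ j‖ := by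
      have h := norm_add_le (x k - (x j + δ j)) (δ j)
      have he : x k - (x j + δ j) + δ j = x k - x j := by abel
      rw [he] at h
      exact h
    have h3 := hδ j
    have h4 := hδ k
    linarith
  have e1 : ∀ j : Fin n, (⨅ k : Fin n, ‖(x j + δ j) - x k‖ ^ 2) = ‖δ j‖ ^ 2 := by
    intro j
    have := my_iInf_eq_of_le (fun k => ‖(x j + δ j) - x k‖ ^ 2) j ?_
    · simpa using this
    · intro k
      by_cases hkj : k = j
      · subst hkj; exact le_refl _
      · show _ ≤ _
        have hj : x j + δ j - x j = δ j := by abel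
        rw [hj]
        exact pow_le_pow_left₀ (norm_nonneg _) (key1 j k hkj) 2
  have e2 : ∀ k : Fin n, (⨅ j : Fin n, ‖x k - (x j + δ j)‖ ^ 2) = ‖δ k‖ ^ 2 := by
    intro k
    have := my_iInf_eq_of_le (fun j => ‖x k - (x j + δ j)‖ ^ 2) k ?_
    · have hk : x k - (x k + δ k) = -δ k := by abel
      rw [this, hk, norm_neg]
    · intro j
      by_cases hjk : j = k
      · subst hjk; exact le_refl _
      · show _ ≤ _
        have hk : x k - (x k + δ k) = -δ k := by abel
        rw [hk, norm_neg]
        exact pow_le_pow_left₀ (norm_nonneg _) (key2 k j hjk) 2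
  unfold chamferDist
  simp only [e1, e2]
  ring
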